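/- Every connected (bull, C4)-free graph is either reducible, or basic, or has a terminal one-point cutset. -/

import Mathlib

open SimpleGraph

variable {V : Type*}

/-- The bull: a triangle 0,1,2 with pendant vertices 3 (adjacent to 0) and 4 (adjacent to 1). -/
def bullGraph : SimpleGraph (Fin 5) :=
  SimpleGraph.fromRel (fun i j =>
    (i = 0 ∧ j = 1) ∨ (i = 0 ∧ j = 2) ∨ (i = 1 ∧ j = 2) ∨ (i = 0 ∧ j = 3) ∨ (i = 1 ∧ j = 4))

/-- The graph consisting of two independent edges: 0-1 and 2-3. -/
def twoK2 : SimpleGraph (Fin 4) :=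
  SimpleGraph.fromRel (fun i j => (i = 0 ∧ j = 1) ∨ (i = 2 ∧ j = 3))

/-- `G` has no induced subgraph isomorphic to `H`. -/
def IndFree {W : Type*} (H : SimpleGraph W) (G : SimpleGraph V) : Prop :=
  IsEmpty (H ↪g G)

/-- A graph is chordal if it has no induced cycle of length at least 4. -/
def Chordal (G : SimpleGraph V) : Prop :=
  ∀ n : ℕ, 4 ≤ n → IndFree (cycleGraph n) G

/-- A cap on a hole of length `n`: a cycle on `ZMod n` together with an extra vertex
adjacent to exactly the two adjacent hole vertices `0` and `1`. -/
def capGraph (n : ℕ) : SimpleGraph (Option (ZMod n)) :=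
  SimpleGraph.fromRel (fun a b =>
    match a, b with
    | some i, some j => j = i + 1
    | none, some i => i = 0 ∨ i = 1
    | _, _ => False)

/-- `x` dominates `y`: they are adjacent and every neighbour of `y` other than `x`
is a neighbour of `x`. -/
def Dominates (G : SimpleGraph V) (x y : V) : Prop :=
  G.Adj x y ∧ ∀ z, G.Adj y z → z ≠ x → G.Adj x z

/-- A graph is reducible if some vertex dominates an adjacent vertex. -/
def Reducible (G : SimpleGraph V) : Prop :=
  ∃ x y, Dominates G x y

/-- Two adjacent vertices with the same neighbours other than each other. -/
def TrueTwins (G : SimpleGraph V) (x y : V) : Prop :=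
  G.Adj x y ∧ ∀ z, z ≠ x → z ≠ y → (G.Adj x z ↔ G.Adj y z)

/-- A vertex is simplicial if its neighbourhood induces a clique. -/
def Simplicial (G : SimpleGraph V) (v : V) : Prop :=
  G.IsClique (G.neighborSet v)

/-- A universal vertex is adjacent to all other vertices. -/
def Universal (G : SimpleGraph V) (v : V) : Prop :=
  ∀ w, w ≠ v → G.Adj v w

/-- A graph is biconnected if it is connected and remains connected after
deleting any single vertex. -/
def Biconnected (G : SimpleGraph V) : Prop :=
  G.Connected ∧ ∀ v : V, (G.induce ({v}ᶜ : Set V)).Connected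

/-- A basic (cap-free) graph: a chordal graph, or a biconnected triangle-free graph
together with at most one additional vertex adjacent to all other vertices. -/
def IsBasic (G : SimpleGraph V) : Prop :=
  Chordal G ∨ (Biconnected G ∧ G.CliqueFree 3) ∨
    (∃ v : V, Universal G v ∧ Biconnected (G.induce ({v}ᶜ : Set V)) ∧
      (G.induce ({v}ᶜ : Set V)).CliqueFree 3)

/-- A one-point cutset: a vertex whose removal disconnects the graph. -/
def IsCutVertex (G : SimpleGraph V) (v : V) : Prop :=
  ¬ (G.induce ({v}ᶜ : Set V)).Connected

/-- `C` is (the vertex set of) a connected component of `G - v`. -/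
def IsComponentOf (G : SimpleGraph V) (v : V) (C : Set V) : Prop :=
  v ∉ C ∧ C.Nonempty ∧ (G.induce C).Connected ∧
    ∀ x ∈ C, ∀ y, G.Adj x y → y ≠ v → y ∈ C

/-- An amalgam partition `(K, A1, B1, A2, B2)` of `G`. -/
structure IsAmalgamPartition (G : SimpleGraph V) (K A1 B1 A2 B2 : Set V) : Prop where
  partition : ∀ v : V, (v ∈ K ∧ v ∉ A1 ∧ v ∉ B1 ∧ v ∉ A2 ∧ v ∉ B2) ∨
    (v ∉ K ∧ v ∈ A1 ∧ v ∉ B1 ∧ v ∉ A2 ∧ v ∉ B2) ∨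
    (v ∉ K ∧ v ∉ A1 ∧ v ∈ B1 ∧ v ∉ A2 ∧ v ∉ B2) ∨
    (v ∉ K ∧ v ∉ A1 ∧ v ∉ B1 ∧ v ∈ A2 ∧ v ∉ B2) ∨
    (v ∉ K ∧ v ∉ A1 ∧ v ∉ B1 ∧ v ∉ A2 ∧ v ∈ B2)
  A1_nonempty : A1.Nonempty
  A2_nonempty : A2.Nonempty
  K_clique : G.IsClique K
  side1_big : 2 ≤ (A1 ∪ B1).ncard
  side2_big : 2 ≤ (A2 ∪ B2).ncard
  A1A2_complete : ∀ a1 ∈ A1, ∀ a2 ∈ A2, G.Adj a1 a2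
  KA1_complete : ∀ k ∈ K, ∀ a ∈ A1, G.Adj k a
  KA2_complete : ∀ k ∈ K, ∀ a ∈ A2, G.Adj k a
  B1_sep : ∀ b ∈ B1, ∀ x ∈ A2 ∪ B2, ¬ G.Adj b x
  B2_sep : ∀ b ∈ B2, ∀ x ∈ A1 ∪ B1, ¬ G.Adj b x

/-- A clique cover of `G`: a finite family of cliques covering all vertices. -/
def IsCliqueCover (G : SimpleGraph V) (𝒞 : Finset (Set V)) : Prop :=
  (∀ s ∈ 𝒞, G.IsClique s) ∧ ∀ v : V, ∃ s ∈ 𝒞, v ∈ s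

/-- The clique cover number `θ(G)`. -/
noncomputable def cliqueCoverNumber (G : SimpleGraph V) : ℕ :=
  sInf {n : ℕ | ∃ 𝒞 : Finset (Set V), IsCliqueCover G 𝒞 ∧ 𝒞.card = n}

/-- A matching of `G`: a finite set of edges, pairwise vertex-disjoint. -/
def IsMatching' (G : SimpleGraph V) (M : Finset (Sym2 V)) : Prop :=
  (↑M : Set (Sym2 V)) ⊆ G.edgeSet ∧
    ∀ e ∈ M, ∀ f ∈ M, e ≠ f → ∀ v : V, v ∈ e → v ∉ f

/-- The maximum size `m(G)` of a matching of `G`. -/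
noncomputable def matchingNumber (G : SimpleGraph V) : ℕ :=
  sSup {n : ℕ | ∃ M : Finset (Sym2 V), IsMatching' G M ∧ M.card = n}

/-- An asteroidal triple: a stable triple such that between any two of its vertices
there is a path avoiding the closed neighbourhood of the third. -/
def IsAT (G : SimpleGraph V) (x y z : V) : Prop :=
  x ≠ y ∧ y ≠ z ∧ x ≠ z ∧ ¬ G.Adj x y ∧ ¬ G.Adj y z ∧ ¬ G.Adj x z ∧
    (∃ p : G.Walk x y, ∀ w ∈ p.support, w ≠ z ∧ ¬ G.Adj z w) ∧
    (∃ p : G.Walk y z, ∀ w ∈ p.support, w ≠ x ∧ ¬ G.Adj x w) ∧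
    (∃ p : G.Walk x z, ∀ w ∈ p.support, w ≠ y ∧ ¬ G.Adj y w)

def ATFree (G : SimpleGraph V) : Prop := ¬ ∃ x y z : V, IsAT G x y z

/-! ### Auxiliary machinery for the proof -/

section StmtTenAux

instance : DecidableRel bullGraph.Adj := fun a b =>
  decidable_of_iff _ (SimpleGraph.fromRel_adj _ a b).symm

variable {G : SimpleGraph V}

lemma no_c4 (hc : IndFree (cycleGraph 4) G) {a b c d : V}
    (hab : G.Adj a b) (hbc : G.Adj b c) (hcd : G.Adj c d) (hda : G.Adj d a)
    (hac : ¬ G.Adj a c) (hbd : ¬ G.Adj b d) (hac' : a ≠ c) (hbd' : b ≠ d) : False := by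
  have hba := hab.symm; have hcb := hbc.symm; have hdc := hcd.symm; have had := hda.symm
  have hca : ¬ G.Adj c a := fun h => hac h.symm
  have hdb : ¬ G.Adj d b := fun h => hbd h.symm
  have h1 : a ≠ b := hab.ne
  have h2 : b ≠ c := hbc.ne
  have h3 : c ≠ d := hcd.ne
  have h4 : d ≠ a := hda.ne
  apply hc.false
  refine ⟨⟨![a,b,c,d], ?_⟩, ?_⟩
  · intro i j hij
    fin_cases i <;> fin_cases j <;> simp_all
  · intro i j
    fin_cases i <;> fin_cases j <;>
      first
        | exact iff_of_false (G.irrefl) (by decide)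
        | exact iff_of_true (by assumption) (by decide)
        | exact iff_of_false (by assumption) (by decide)

lemma no_bull (hb : IndFree bullGraph G) {x y z p q : V}
    (hxy : G.Adj x y) (hxz : G.Adj x z) (hyz : G.Adj y z)
    (hxp : G.Adj x p) (hyq : G.Adj y q)
    (hyp : ¬ G.Adj y p) (hzp : ¬ G.Adj z p)
    (hxq : ¬ G.Adj x q) (hzq : ¬ G.Adj z q) (hpq : ¬ G.Adj p q) : False := by
  have e1 := hxy.symm; have e2 := hxz.symm; have e3 := hyz.symm
  have e4 := hxp.symm; have e5 := hyq.symm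
  have n1 : ¬ G.Adj p y := fun h => hyp h.symm
  have n2 : ¬ G.Adj p z := fun h => hzp h.symm
  have n3 : ¬ G.Adj q x := fun h => hxq h.symm
  have n4 : ¬ G.Adj q z := fun h => hzq h.symm
  have n5 : ¬ G.Adj q p := fun h => hpq h.symm
  have d1 : x ≠ y := hxy.ne
  have d2 : x ≠ z := hxz.ne
  have d3 : y ≠ z := hyz.ne
  have d4 : x ≠ p := hxp.ne
  have d5 : y ≠ q := hyq.ne
  have d6 : p ≠ y := fun h => hzp (h ▸ hyz.symm)
  have d7 : p ≠ z := fun h => hyp (h ▸ hyz)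
  have d8 : q ≠ x := fun h => hzq (h ▸ hxz.symm)
  have d9 : q ≠ z := fun h => hxq (h ▸ hxz)
  have d10 : p ≠ q := fun h => hxq (h ▸ hxp)
  apply hb.false
  refine ⟨⟨![x,y,z,p,q], ?_⟩, ?_⟩
  · intro i j hij
    fin_cases i <;> fin_cases j <;> simp_all
  · intro i j
    fin_cases i <;> fin_cases j <;>
      first
        | exact iff_of_false (G.irrefl) (by decide)
        | exact iff_of_true (by assumption) (by decide)
        | exact iff_of_false (by assumption) (by decide)

section PartI
variable (hb : IndFree bullGraph G) (hc : IndFree (cycleGraph 4) G)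
  (nd : ∀ x y, G.Adj x y → ∃ z, G.Adj y z ∧ z ≠ x ∧ ¬ G.Adj x z)

include hb hc in
/-- Pendant rule: given a triangle `X,Y,Z` and a vertex `P` adjacent exactly to `X`,
every neighbour of `Y` that is not adjacent (nor equal) to `X` is adjacent to `Z`. -/
lemma rstar {X Y Z P Q : V}
    (hXY : G.Adj X Y) (hXZ : G.Adj X Z) (hYZ : G.Adj Y Z)
    (hPX : G.Adj X P) (hPY : ¬ G.Adj Y P) (hPZ : ¬ G.Adj Z P)
    (hQY : G.Adj Y Q) (hQX : ¬ G.Adj X Q) (hQneX : Q ≠ X) : G.Adj Z Q := by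
  by_contra hQZ
  by_cases hPQ : G.Adj P Q
  · exact no_c4 hc hPX.symm hXY hQY hPQ.symm
      (fun h => hPY h.symm) hQX
      (fun h => hPZ (by rw [h]; exact hYZ.symm)) (Ne.symm hQneX)
  · exact no_bull hb hXY hXZ hYZ hPX hQY hPY hPZ hQX hQZ hPQ

include hb hc nd in
/-- A triangle with a pendant vertex contradicts irreducibility. -/
lemma caseA {X Y Z P : V}
    (hXY : G.Adj X Y) (hXZ : G.Adj X Z) (hYZ : G.Adj Y Z)
    (hPX : G.Adj X P) (hPY : ¬ G.Adj Y P) (hPZ : ¬ G.Adj Z P) : False := by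
  obtain ⟨q, hYq, hqX, hXq⟩ := nd X Y hXY
  have hZq : G.Adj Z q := rstar hb hc hXY hXZ hYZ hPX hPY hPZ hYq hXq hqX
  obtain ⟨r, hYr, hrZ, hZr⟩ := nd Z Y hYZ.symm
  have hrX : r ≠ X := fun h => hZr (by rw [h]; exact hXZ.symm)
  have hXr : G.Adj X r := by
    by_contra hXr
    exact hZr (rstar hb hc hXY hXZ hYZ hPX hPY hPZ hYr hXr hrX)
  obtain ⟨s, hqs, hsY, hYs⟩ := nd Y q hYq
  have hsX : s ≠ X := fun h => hXq (by rw [h] at hqs; exact hqs.symm)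
  by_cases hZs : G.Adj Z s
  · have hXs : G.Adj X s := by
      by_contra hXs
      exact hYs (rstar hb hc hXZ hXY hYZ.symm hPX hPZ hPY hZs hXs hsX)
    exact no_c4 hc hXs.symm hXY hYq hqs
      (fun h => hYs h.symm) hXq hsY (Ne.symm hqX)
  · have hrq : r ≠ q := fun h => hZr (by rw [h]; exact hZq)
    have hqr : G.Adj q r := by
      by_contra hqr
      exact hZr (rstar hb hc hYq.symm hZq.symm hYZ hqs hYs hZs hYr hqr hrq)
    exact no_c4 hc hqr.symm hZq.symm hXZ.symm hXr
      (fun h => hZr h.symm) (fun h => hXq h.symm) hrZ hqX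
end PartI

/-- KEY LEMMA: a (bull, C4)-free graph containing a triangle is reducible. -/
lemma triangle_reducible (hb : IndFree bullGraph G) (hc : IndFree (cycleGraph 4) G)
    {x y z : V} (hxy : G.Adj x y) (hxz : G.Adj x z) (hyz : G.Adj y z) :
    Reducible G := by
  by_contra hred
  have nd : ∀ a b, G.Adj a b → ∃ c, G.Adj b c ∧ c ≠ a ∧ ¬ G.Adj a c := by
    intro a b hab
    by_contra hcon
    push_neg at hcon
    exact hred ⟨a, b, hab, fun c h1 h2 => hcon c h1 h2⟩
  obtain ⟨p, hXp, hpY, hYp⟩ := nd y x hxy.symm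
  have hZp : G.Adj z p := by
    by_contra hZp
    exact caseA hb hc nd hxy hxz hyz hXp hYp hZp
  obtain ⟨r, hXr, hrZ, hZr⟩ := nd z x hxz.symm
  have hYr : G.Adj y r := by
    by_contra hYr
    exact caseA hb hc nd hxz hxy hyz.symm hXr hZr hYr
  have hpr : ¬ G.Adj p r := by
    intro hpr
    exact no_c4 hc hZp.symm hyz.symm hYr hpr.symm
      (fun h => hYp h.symm) hZr hpY (Ne.symm hrZ)
  exact caseA hb hc nd hXp hxz hZp.symm hXr hpr hZr

/-! ### Connectivity inside vertex subsets -/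

/-- Reachability via a walk whose support stays inside `S`. -/
def ReachIn (G : SimpleGraph V) (S : Set V) (x y : V) : Prop :=
  ∃ p : G.Walk x y, ∀ z ∈ p.support, z ∈ S

namespace ReachIn

lemma refl {S : Set V} {x : V} (hx : x ∈ S) : ReachIn G S x x :=
  ⟨SimpleGraph.Walk.nil, by simp [hx]⟩

lemma symm {S : Set V} {x y : V} : ReachIn G S x y → ReachIn G S y x := by
  rintro ⟨p, hp⟩
  exact ⟨p.reverse, by simpa [Walk.support_reverse] using hp⟩

lemma trans {S : Set V} {x y z : V} : ReachIn G S x y → ReachIn G S y z → ReachIn G S x z := by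
  rintro ⟨p, hp⟩ ⟨q, hq⟩
  refine ⟨p.append q, fun w hw => ?_⟩
  rw [Walk.support_append] at hw
  rcases List.mem_append.mp hw with h | h
  · exact hp w h
  · exact hq w (List.mem_of_mem_tail h)

lemma cons {S : Set V} {x y z : V} (h : G.Adj x y) (hx : x ∈ S) :
    ReachIn G S y z → ReachIn G S x z := by
  rintro ⟨p, hp⟩
  refine ⟨SimpleGraph.Walk.cons h p, fun w hw => ?_⟩
  rw [Walk.support_cons] at hw
  rcases List.mem_cons.mp hw with rfl | hw
  · exact hx
  · exact hp w hw

lemma mem_left {S : Set V} {x y : V} (h : ReachIn G S x y) : x ∈ S := by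
  obtain ⟨p, hp⟩ := h; exact hp x p.start_mem_support

lemma mem_right {S : Set V} {x y : V} (h : ReachIn G S x y) : y ∈ S := by
  obtain ⟨p, hp⟩ := h; exact hp y p.end_mem_support

end ReachIn

lemma reachIn_of_mem_support {S : Set V} :
    ∀ {x y : V} (p : G.Walk x y), (∀ z ∈ p.support, z ∈ S) →
      ∀ z ∈ p.support, ReachIn G S x z := by
  intro x y p
  induction p with
  | nil =>
    intro hp z hz
    rw [Walk.support_nil, List.mem_singleton] at hz
    subst hz
    exact ReachIn.refl (hp _ (by simp))
  | @cons a b c h q ih =>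
    intro hp z hz
    rw [Walk.support_cons] at hz
    have ha : a ∈ S := hp a (by simp [Walk.support_cons])
    rcases List.mem_cons.mp hz with rfl | hz
    · exact ReachIn.refl ha
    · have hq : ∀ w ∈ q.support, w ∈ S := fun w hw => hp w (by simp [Walk.support_cons, hw])
      exact ReachIn.cons h ha (ih hq z hz)

lemma reachable_in_induce {S : Set V} :
    ∀ {x y : V} (p : G.Walk x y), (∀ z ∈ p.support, z ∈ S) →
      ∀ (hx : x ∈ S) (hy : y ∈ S), (G.induce S).Reachable ⟨x, hx⟩ ⟨y, hy⟩ := by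
  intro x y p
  induction p with
  | nil => intro _ hx hy; exact SimpleGraph.Reachable.refl _
  | @cons a b c h q ih =>
    intro hp hx hy
    have hb : b ∈ S := hp b (by simp [Walk.support_cons])
    have hadj : (G.induce S).Adj ⟨a, hx⟩ ⟨b, hb⟩ := h
    exact hadj.reachable.trans
      (ih (fun w hw => hp w (by simp [Walk.support_cons, hw])) hb hy)

lemma induce_connected_iff {S : Set V} :
    (G.induce S).Connected ↔ S.Nonempty ∧ ∀ x ∈ S, ∀ y ∈ S, ReachIn G S x y := by
  constructor
  · intro h
    have hne : S.Nonempty := by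
      obtain ⟨⟨x, hx⟩⟩ := h.nonempty
      exact ⟨x, hx⟩
    refine ⟨hne, fun x hx y hy => ?_⟩
    obtain ⟨p⟩ := h.preconnected ⟨x, hx⟩ ⟨y, hy⟩
    refine ⟨p.map (SimpleGraph.Embedding.induce S).toHom, fun z hz => ?_⟩
    erw [Walk.support_map] at hz
    obtain ⟨⟨z', hz'⟩, _, rfl⟩ := List.mem_map.mp hz
    exact hz'
  · rintro ⟨⟨x0, hx0⟩, hpairs⟩
    have : Nonempty S := ⟨⟨x0, hx0⟩⟩
    constructor
    rintro ⟨x, hx⟩ ⟨y, hy⟩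
    obtain ⟨p, hp⟩ := hpairs x hx y hy
    exact reachable_in_induce p hp hx hy

/-- The reachability component of `u` in `G - w` is a component. -/
lemma comp_isComponent {w u : V} (hu : u ≠ w) :
    IsComponentOf G w {y | ReachIn G ({w}ᶜ : Set V) u y} := by
  have hucomp : (u : V) ∈ ({w}ᶜ : Set V) := hu
  refine ⟨?_, ⟨u, ReachIn.refl hucomp⟩, ?_, ?_⟩
  · intro hw
    exact (ReachIn.mem_right hw) rfl
  · rw [induce_connected_iff]
    refine ⟨⟨u, ReachIn.refl hucomp⟩, fun a ha b hb => ?_⟩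
    have ha' : ReachIn G {y | ReachIn G ({w}ᶜ : Set V) u y} u a := by
      obtain ⟨p, hp⟩ := ha
      exact ⟨p, fun z hz => reachIn_of_mem_support p hp z hz⟩
    have hb' : ReachIn G {y | ReachIn G ({w}ᶜ : Set V) u y} u b := by
      obtain ⟨p, hp⟩ := hb
      exact ⟨p, fun z hz => reachIn_of_mem_support p hp z hz⟩
    exact ha'.symm.trans hb'
  · intro a ha b hab hbw
    refine ha.trans ⟨SimpleGraph.Walk.cons hab SimpleGraph.Walk.nil, ?_⟩
    intro z hz
    have hz2 : z = a ∨ z = b := by simpa using hz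
    rcases hz2 with rfl | rfl
    · exact ReachIn.mem_right ha
    · simpa using hbw

/-- Double induced subgraphs are isomorphic to the induced subgraph on the image. -/
noncomputable def inducedIso (S : Set V) (T : Set ↥S) :
    ((G.induce S).induce T) ≃g (G.induce (Subtype.val '' T)) where
  toFun := fun a => ⟨a.1.1, ⟨a.1, a.2, rfl⟩⟩
  invFun := fun b => ⟨b.2.choose, b.2.choose_spec.1⟩
  left_inv := by
    intro a
    apply Subtype.ext
    apply Subtype.ext
    have h := (⟨a.1.1, ⟨a.1, a.2, rfl⟩⟩ : ↥(Subtype.val '' T)).2.choose_spec.2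
    simpa using h
  right_inv := by
    intro b
    apply Subtype.ext
    exact b.2.choose_spec.2
  map_rel_iff' := Iff.rfl

lemma connected_of_iso {α β : Type*} {A : SimpleGraph α} {B : SimpleGraph β}
    (e : A ≃g B) (h : A.Connected) : B.Connected :=
  h.map e.toHom e.toEquiv.surjective

/-- From any vertex of `C ∪ {v}` one can reach `v` inside `C ∪ {v}`. -/
lemma walk_to_apex {C : Set V} :
    ∀ {x v : V} (p : G.Walk x v), IsComponentOf G v C → x ∈ insert v C →
      ReachIn G (insert v C) x v := by
  intro x v p
  induction p with
  | nil => intro _ _; exact ReachIn.refl (Set.mem_insert _ _)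
  | @cons a b c h q ih =>
    intro hcomp hx
    rcases eq_or_ne a c with rfl | hav
    · exact ReachIn.refl (Set.mem_insert _ _)
    · have haC : a ∈ C := hx.resolve_left hav
      have hb : b ∈ insert c C := by
        rcases eq_or_ne b c with rfl | hbv
        · exact Set.mem_insert _ _
        · exact Set.mem_insert_of_mem _ (hcomp.2.2.2 a haC b h hbv)
      exact ReachIn.cons h (Set.mem_insert_of_mem _ haC) (ih hcomp hb)

/-- The same, avoiding a vertex `w ∈ C`, provided the walk avoids it. -/
lemma walk_to_apex_avoid {C : Set V} {w : V} (hw : w ∈ C) :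
    ∀ {x v : V} (p : G.Walk x v), IsComponentOf G v C → (∀ z ∈ p.support, z ≠ w) →
      x ∈ insert v C → ReachIn G (insert v C \ {w}) x v := by
  intro x v p
  induction p with
  | nil =>
    intro hcomp _ _
    refine ReachIn.refl ⟨Set.mem_insert _ _, ?_⟩
    simp only [Set.mem_singleton_iff]
    intro h; subst h; exact hcomp.1 hw
  | @cons a b c h q ih =>
    intro hcomp hsup hx
    rcases eq_or_ne a c with rfl | hav
    · refine ReachIn.refl ⟨Set.mem_insert _ _, ?_⟩
      simp only [Set.mem_singleton_iff]
      intro hh; subst hh; exact hcomp.1 hw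
    · have haC : a ∈ C := hx.resolve_left hav
      have haw : a ≠ w := hsup a (by simp [Walk.support_cons])
      have hb : b ∈ insert c C := by
        rcases eq_or_ne b c with rfl | hbv
        · exact Set.mem_insert _ _
        · exact Set.mem_insert_of_mem _ (hcomp.2.2.2 a haC b h hbv)
      refine ReachIn.cons h ⟨Set.mem_insert_of_mem _ haC, by simpa using haw⟩ ?_
      exact ih hcomp (fun z hz => hsup z (by simp [Walk.support_cons, hz])) hb

/-- Walks avoiding `w` that start in `C` and cannot reach `v` stay inside `C`. -/
lemma stay_in_C {C : Set V} {v w : V} (hcomp : IsComponentOf G v C) :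
    ∀ {x y : V} (p : G.Walk x y), x ∈ C → ¬ ReachIn G ({w}ᶜ : Set V) x v →
      (∀ z ∈ p.support, z ≠ w) → ∀ z ∈ p.support, z ∈ C := by
  intro x y p
  induction p with
  | nil =>
    intro hx _ _ z hz
    rw [Walk.support_nil, List.mem_singleton] at hz
    subst hz; exact hx
  | @cons a b c h q ih =>
    intro hx hnr hsup z hz
    have haw : a ≠ w := hsup a (by simp [Walk.support_cons])
    have hbw : b ≠ w := hsup b (by simp [Walk.support_cons])
    have hbv : b ≠ v := by
      intro hh; subst hh
      refine hnr ⟨SimpleGraph.Walk.cons h SimpleGraph.Walk.nil, ?_⟩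
      intro u hu
      have h2 : u = a ∨ u = b := by simpa using hu
      rcases h2 with rfl | rfl
      · simpa using haw
      · simpa using hbw
    have hbC : b ∈ C := hcomp.2.2.2 a hx b h hbv
    have hnrb : ¬ ReachIn G ({w}ᶜ : Set V) b v := by
      intro hr
      exact hnr (ReachIn.cons h (by simpa using haw) hr)
    rw [Walk.support_cons] at hz
    rcases List.mem_cons.mp hz with rfl | hz2
    · exact hx
    · exact ih hbC hnrb (fun u hu => hsup u (by simp [Walk.support_cons, hu])) z hz2

/-- MAIN STRUCTURAL LEMMA: in a connected, non-biconnected graph, a minimum-size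
component hanging at a cut vertex gives a biconnected piece. -/
lemma tf_case [Fintype V] (hconn : G.Connected)
    (hnb : ∃ w : V, ¬ (G.induce ({w}ᶜ : Set V)).Connected)
    (h2 : ∀ v : V, ∃ u : V, u ≠ v) :
    ∃ v C, IsCutVertex G v ∧ IsComponentOf G v C ∧
      Biconnected (G.induce (insert v C)) := by
  classical
  set M : Set ℕ := {n | ∃ v C, IsCutVertex G v ∧ IsComponentOf G v C ∧ C.ncard = n} with hMdef
  have hMne : M.Nonempty := by
    obtain ⟨w, hw⟩ := hnb
    obtain ⟨u, hu⟩ := h2 w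
    exact ⟨_, w, _, hw, comp_isComponent hu, rfl⟩
  obtain ⟨v, C, hcut, hcomp, hcard⟩ := Nat.sInf_mem hMne
  have hreach_v : ∀ x ∈ insert v C, ReachIn G (insert v C) x v := by
    intro x hx
    obtain ⟨p⟩ := hconn x v
    exact walk_to_apex p hcomp hx
  have hPconn : (G.induce (insert v C)).Connected := by
    rw [induce_connected_iff]
    exact ⟨⟨v, Set.mem_insert _ _⟩, fun a ha b hb => (hreach_v a ha).trans (hreach_v b hb).symm⟩
  refine ⟨v, C, hcut, hcomp, hPconn, ?_⟩
  rintro ⟨w, hwmem⟩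
  have himg : (Subtype.val '' ({(⟨w, hwmem⟩ : ↥(insert v C))}ᶜ : Set ↥(insert v C)))
      = insert v C \ {w} := by
    ext y
    constructor
    · rintro ⟨⟨y', hy'⟩, hy2, rfl⟩
      refine ⟨hy', ?_⟩
      simpa [Subtype.ext_iff] using hy2
    · rintro ⟨hy1, hy2⟩
      exact ⟨⟨y, hy1⟩, by simpa [Subtype.ext_iff] using hy2, rfl⟩
  apply connected_of_iso (inducedIso _ _).symm
  rw [himg]
  rcases Set.mem_insert_iff.mp hwmem with rfl | hwC
  · rw [Set.insert_diff_self_of_notMem hcomp.1]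
    exact hcomp.2.2.1
  · have hvw : v ≠ w := fun h => hcomp.1 (h ▸ hwC)
    have hvS : v ∈ insert v C \ {w} := ⟨Set.mem_insert _ _, by simpa using hvw⟩
    rw [induce_connected_iff]
    refine ⟨⟨v, hvS⟩, ?_⟩
    have hall : ∀ x ∈ insert v C \ {w}, ReachIn G (insert v C \ {w}) x v := by
      by_contra hbad
      push_neg at hbad
      obtain ⟨x, hxS, hnr⟩ := hbad
      have hxv : x ≠ v := by rintro rfl; exact hnr (ReachIn.refl hvS)
      have hxC : x ∈ C := hxS.1.resolve_left hxv
      have hxw : x ≠ w := by simpa using hxS.2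
      have hnr' : ¬ ReachIn G ({w}ᶜ : Set V) x v := by
        rintro ⟨p, hp⟩
        exact hnr (walk_to_apex_avoid hwC p hcomp
          (fun z hz => by simpa using hp z hz) (Set.mem_insert_of_mem _ hxC))
      set D : Set V := {y | ReachIn G ({w}ᶜ : Set V) x y} with hDdef
      have hDcomp : IsComponentOf G w D := comp_isComponent hxw
      have hDsub : D ⊆ C := by
        rintro t ⟨p, hp⟩
        exact stay_in_C hcomp p hxC hnr' (fun z hz => by simpa using hp z hz) t p.end_mem_support
      have hDlt : D.ncard < C.ncard := by
        apply Set.ncard_lt_ncard _ (Set.toFinite C)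
        exact (Set.ssubset_iff_of_subset hDsub).mpr ⟨w, hwC, hDcomp.1⟩
      have hcutw : IsCutVertex G w := by
        intro hcon
        rw [induce_connected_iff] at hcon
        exact hnr' (hcon.2 x (by simpa using hxw) v (by simpa using hvw))
      have hle : sInf M ≤ D.ncard := Nat.sInf_le ⟨w, D, hcutw, hDcomp, rfl⟩
      omega
    intro a ha b hb
    exact (hall a ha).trans (hall b hb).symm

/-! ### small auxiliary facts -/

lemma cliqueFree_three_of {H : SimpleGraph V}
    (h : ¬ ∃ x y z : V, H.Adj x y ∧ H.Adj x z ∧ H.Adj y z) : H.CliqueFree 3 := by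
  classical
  intro t ht
  obtain ⟨a, b, c, hab, hac, hbc, rfl⟩ := Finset.card_eq_three.mp ht.card_eq
  exact h ⟨a, b, c, ht.isClique (by simp) (by simp) hab,
    ht.isClique (by simp) (by simp) hac, ht.isClique (by simp) (by simp) hbc⟩

lemma cliqueFree_three_induce {S : Set V}
    (h : ¬ ∃ x y z : V, G.Adj x y ∧ G.Adj x z ∧ G.Adj y z) :
    (G.induce S).CliqueFree 3 := by
  apply cliqueFree_three_of
  rintro ⟨a, b, c, h1, h2, h3⟩
  exact h ⟨a.1, b.1, c.1, h1, h2, h3⟩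

lemma chordal_of_subsingleton (hone : ∀ a b : V, a = b) {H : SimpleGraph V} : Chordal H := by
  intro n hn
  constructor
  intro f
  have h01 : (⟨0, by omega⟩ : Fin n) = ⟨1, by omega⟩ := f.injective (hone _ _)
  simp [Fin.ext_iff] at h01

end StmtTenAux

/-- every connected (bull, C4)-free graph is reducible, or basic, or has a
terminal one-point cutset. -/
theorem stmt10 [Fintype V] (G : SimpleGraph V) (hconn : G.Connected)
    (hb : IndFree bullGraph G) (hc : IndFree (SimpleGraph.cycleGraph 4) G) :
    Reducible G ∨ IsBasic G ∨
      ∃ v : V, IsCutVertex G v ∧ ∃ C : Set V, IsComponentOf G v C ∧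
        (G.induce (insert v C)).CliqueFree 3 ∧ IsBasic (G.induce (insert v C)) := by
  classical
  by_cases htri : ∃ x y z : V, G.Adj x y ∧ G.Adj x z ∧ G.Adj y z
  · obtain ⟨x, y, z, h1, h2, h3⟩ := htri
    exact Or.inl (triangle_reducible hb hc h1 h2 h3)
  by_cases hone : ∀ a b : V, a = b
  · exact Or.inr (Or.inl (Or.inl (chordal_of_subsingleton hone)))
  by_cases hbic : ∀ w : V, (G.induce ({w}ᶜ : Set V)).Connected
  · exact Or.inr (Or.inl (Or.inr (Or.inl ⟨⟨hconn, hbic⟩, cliqueFree_three_of htri⟩)))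
  push_neg at hbic hone
  obtain ⟨a, b, hab⟩ := hone
  have h2' : ∀ v : V, ∃ u : V, u ≠ v := by
    intro v
    by_cases hva : v = a
    · exact ⟨b, by rw [hva]; exact fun h => hab h.symm⟩
    · exact ⟨a, fun h => hva h.symm⟩
  obtain ⟨v, C, hcut, hcomp, hbi⟩ := tf_case hconn hbic h2'
  exact Or.inr (Or.inr ⟨v, hcut, C, hcomp, cliqueFree_three_induce htri,
    Or.inr (Or.inl ⟨hbi, cliqueFree_three_induce htri⟩)⟩)
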